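/- arXiv:1505.01259 — 6 statements merged into one kernel-verified Lean document; each statement's English description precedes it below -/
import Mathlib

section
/- If U ⊆ V_{n,m} and the induced subgraph G[U] of the Johnson graph J_{n,m} is connected, then |⋃U| ≤ m - 1 + |U|. -/
/-- `Vnm n m` is the collection of all `m`-element subsets of `{0,...,n-1}`. -/
def Vnm (n m : ℕ) : Set (Finset ℕ) := {b | b ⊆ Finset.range n ∧ b.card = m}

/-- The ζ-operator: unions of pairs of members of `U` intersecting in `m - 1` elements. -/
def zeta (m : ℕ) (U : Set (Finset ℕ)) : Set (Finset ℕ) :=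
  {x | ∃ c ∈ U, ∃ d ∈ U, (c ∩ d).card = m - 1 ∧ x = c ∪ d}

/-- Iterated ζ-operator: `ζ^0(U) = U`, `ζ^{v+1}(U) = ζ(ζ^v(U))`
(the level parameter increases by one at each step since `ζ^v(U) ⊆ V_{n,m+v}`). -/
def zetaIter (m : ℕ) : ℕ → Set (Finset ℕ) → Set (Finset ℕ)
  | 0, U => U
  | v + 1, U => zeta (m + v) (zetaIter m v U)

/-- The union `⋃ U` of all members of a family of finite sets. -/
def unionAll (U : Set (Finset ℕ)) : Set ℕ := ⋃ b ∈ U, (b : Set ℕ)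

/-- The induced subgraph `G[U]` of the Johnson graph `J_{n,m}`:
vertices are the members of `U`, two of them adjacent iff distinct with
intersection of cardinality `m - 1`. -/
def inducedGraph (m : ℕ) (U : Set (Finset ℕ)) : SimpleGraph U where
  Adj x y := (x : Finset ℕ) ≠ (y : Finset ℕ) ∧ ((x : Finset ℕ) ∩ (y : Finset ℕ)).card = m - 1
  symm := ⟨fun x y ⟨h1, h2⟩ => ⟨h1.symm, by rwa [Finset.inter_comm]⟩⟩
  loopless := ⟨fun x ⟨h1, _⟩ => h1 rfl⟩

/-- The connected components of `G[U]`, viewed as subsets of `U`. -/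
def componentSets (m : ℕ) (U : Set (Finset ℕ)) : Set (Set (Finset ℕ)) :=
  {Z | ∃ C : (inducedGraph m U).ConnectedComponent,
    Z = Subtype.val '' {x : U | (inducedGraph m U).connectedComponentMk x = C}}

lemma cross_lemma {V : Type*} (G : SimpleGraph V) (T : Set V) :
    ∀ {a b : V} (_ : G.Walk a b), a ∈ T → b ∉ T → ∃ x, x ∉ T ∧ ∃ s ∈ T, G.Adj s x := by
  intro a b w
  induction w with
  | nil => intro ha hb; exact absurd ha hb
  | @cons u v c h p ih =>
    intro ha hb
    by_cases hv : v ∈ T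
    · exact ih hv hb
    · exact ⟨v, hv, u, ha, h⟩

theorem stmt3 (n m : ℕ) (U : Set (Finset ℕ)) (hU : U ⊆ Vnm n m)
    (hconn : (inducedGraph m U).Connected) :
    (unionAll U).ncard ≤ m - 1 + U.ncard := by
  have hUfin : U.Finite := by
    apply Set.Finite.subset ((Finset.range n).powerset.finite_toSet)
    intro b hb
    exact Finset.mem_coe.mpr (Finset.mem_powerset.mpr (hU hb).1)
  have hsubfin : ∀ S : Set (Finset ℕ), S ⊆ U → (unionAll S).Finite := by
    intro S hS
    apply Set.Finite.subset ((Finset.range n).finite_toSet)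
    intro x hx
    simp only [unionAll, Set.mem_iUnion] at hx
    obtain ⟨b, hb, hxb⟩ := hx
    exact (hU (hS hb)).1 hxb
  have key : ∀ k (S : Set (Finset ℕ)), S.Nonempty → S ⊆ U → (U \ S).ncard = k →
      (unionAll U).ncard ≤ (unionAll S).ncard + k := by
    intro k
    induction k with
    | zero =>
      intro S _ hSU hcard
      have hd : U \ S = ∅ := (Set.ncard_eq_zero (hUfin.diff)).mp hcard
      have : U = S := by
        rw [Set.diff_eq_empty] at hd
        exact Set.Subset.antisymm hd hSU
      rw [this]
      omega
    | succ k ih =>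
      intro S hSne hSU hcard
      obtain ⟨a, haS⟩ := hSne
      have hne : (U \ S).Nonempty := by
        rw [← Set.ncard_pos (hUfin.diff)]
        omega
      obtain ⟨b, hbU, hbS⟩ := hne
      obtain ⟨w⟩ := hconn.preconnected ⟨a, hSU haS⟩ ⟨b, hbU⟩
      obtain ⟨x, hxT, s, hsT, hadj⟩ :=
        cross_lemma (inducedGraph m U) (Subtype.val ⁻¹' S) w haS hbS
      set S' : Set (Finset ℕ) := insert (x : Finset ℕ) S with hS'
      have hxU : (x : Finset ℕ) ∈ U := x.2
      have hxS : (x : Finset ℕ) ∉ S := hxT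
      have hsS : (s : Finset ℕ) ∈ S := hsT
      have hcardInt : ((s : Finset ℕ) ∩ (x : Finset ℕ)).card = m - 1 := hadj.2
      have hS'U : S' ⊆ U := by
        intro b hb
        rcases hb with hb | hb
        · exact hb ▸ hxU
        · exact hSU hb
      -- cardinality of U \ S'
      have hdiff : U \ S' = (U \ S) \ {(x : Finset ℕ)} := by
        ext b; simp [hS']; tauto
      have hmem : (x : Finset ℕ) ∈ U \ S := ⟨hxU, hxS⟩
      have hcard' : (U \ S').ncard = k := by
        rw [hdiff, Set.ncard_diff_singleton_of_mem hmem, hcard]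
        omega
      -- union bound
      have hxsub : (unionAll S') ⊆ (((x : Finset ℕ) \ (s : Finset ℕ) : Finset ℕ) : Set ℕ) ∪ unionAll S := by
        intro y hy
        simp only [unionAll, hS', Set.mem_iUnion, Set.mem_insert_iff] at hy
        obtain ⟨b, hb | hb, hyb⟩ := hy
        · subst hb
          by_cases hys : y ∈ (s : Finset ℕ)
          · right
            simp only [unionAll, Set.mem_iUnion]
            exact ⟨s, hsS, hys⟩
          · left
            simp only [Finset.coe_sdiff, Set.mem_diff, Finset.mem_coe]
            exact ⟨hyb, hys⟩
        · right
          simp only [unionAll, Set.mem_iUnion]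
          exact ⟨b, hb, hyb⟩
      have hxcard : ((x : Finset ℕ) \ (s : Finset ℕ)).card ≤ 1 := by
        have h1 : ((x : Finset ℕ) \ (s : Finset ℕ)).card + ((x : Finset ℕ) ∩ (s : Finset ℕ)).card
            = (x : Finset ℕ).card := Finset.card_sdiff_add_card_inter _ _
        have h2 : (x : Finset ℕ).card = m := (hU hxU).2
        rw [Finset.inter_comm] at h1
        omega
      have hbound : (unionAll S').ncard ≤ (unionAll S).ncard + 1 := by
        calc (unionAll S').ncard
            ≤ ((((x : Finset ℕ) \ (s : Finset ℕ) : Finset ℕ) : Set ℕ) ∪ unionAll S).ncard :=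
              Set.ncard_le_ncard hxsub
                ((((x : Finset ℕ) \ (s : Finset ℕ)).finite_toSet).union (hsubfin S hSU))
          _ ≤ (((x : Finset ℕ) \ (s : Finset ℕ) : Finset ℕ) : Set ℕ).ncard + (unionAll S).ncard :=
              Set.ncard_union_le _ _
          _ ≤ (unionAll S).ncard + 1 := by
              rw [Set.ncard_coe_finset]
              omega
      have := ih S' ⟨x, Set.mem_insert _ _⟩ hS'U hcard'
      omega
  -- apply with S = {a}
  obtain ⟨a⟩ := hconn.nonempty
  have haU : (a : Finset ℕ) ∈ U := a.2
  have h1 : unionAll {(a : Finset ℕ)} = ((a : Finset ℕ) : Set ℕ) := by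
    simp [unionAll]
  have h2 : (U \ {(a : Finset ℕ)}).ncard = U.ncard - 1 :=
    Set.ncard_diff_singleton_of_mem haU
  have h3 := key (U.ncard - 1) {(a : Finset ℕ)} (Set.singleton_nonempty _)
    (Set.singleton_subset_iff.mpr haU) h2
  rw [h1, Set.ncard_coe_finset, (hU haU).2] at h3
  have h4 : 0 < U.ncard := (Set.ncard_pos hUfin).mpr ⟨_, haU⟩
  omega
end

section
/- If U ⊆ V_{n,m} with |U| ≤ n - m and the induced subgraph G[U] of the Johnson graph J_{n,m} is connected, then ⋃U ≠ {1,...,n}. -/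
theorem stmt4 (n m : ℕ) (U : Set (Finset ℕ)) (hU : U ⊆ Vnm n m)
    (hcard : U.ncard ≤ n - m) (hconn : (inducedGraph m U).Connected) :
    unionAll U ≠ ↑(Finset.range n) := by
  intro heq
  classical
  -- U is finite
  have hVfin : (Vnm n m).Finite :=
    Set.Finite.subset (Finset.range n).powerset.finite_toSet
      (fun b hb => Finset.mem_coe.mpr (Finset.mem_powerset.mpr hb.1))
  have hfin : U.Finite := hVfin.subset hU
  haveI : Finite U := hfin.to_subtype
  obtain ⟨b₀⟩ := hconn.nonempty
  set G := inducedGraph m U with hG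
  set d : U → ℕ := fun b => G.dist b₀ b with hd
  -- key step lemma: every vertex other than b₀ has a neighbor strictly closer to b₀
  have keyL : ∀ b : U, b ≠ b₀ → ∃ c : U, G.Adj c b ∧ d c < d b := by
    intro b hb
    have hpos : 0 < G.dist b₀ b := hconn.pos_dist_of_ne (Ne.symm hb)
    obtain ⟨p, hp⟩ := hconn.exists_walk_length_eq_dist b₀ b
    obtain ⟨c, hadj, q, hq⟩ := SimpleGraph.Walk.exists_eq_cons_of_ne hb p.reverse
    refine ⟨c, hadj.symm, ?_⟩
    have hlen : q.length + 1 = G.dist b₀ b := by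
      have := congrArg SimpleGraph.Walk.length hq
      simpa [hp] using this.symm
    have hle : G.dist b₀ c ≤ q.reverse.length := SimpleGraph.dist_le q.reverse
    simp only [SimpleGraph.Walk.length_reverse] at hle
    simp only [hd]
    omega
  -- for each x, pick a set containing x at minimal distance (when one exists)
  have key : ∀ x : ℕ, ∃ b : U, (x ∈ (b : Finset ℕ) →
      x ∈ (b : Finset ℕ) ∧ True) ∧
      ((∃ b' : U, x ∈ (b' : Finset ℕ)) →
        x ∈ (b : Finset ℕ) ∧ ∀ b' : U, x ∈ (b' : Finset ℕ) → d b ≤ d b') := by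
    intro x
    by_cases hx : ∃ b' : U, x ∈ (b' : Finset ℕ)
    · obtain ⟨b, hb, hmin⟩ := Set.exists_min_image {b : U | x ∈ (b : Finset ℕ)} d
        (Set.toFinite _) hx
      exact ⟨b, fun h => ⟨h, trivial⟩, fun _ => ⟨hb, hmin⟩⟩
    · exact ⟨b₀, fun h => ⟨h, trivial⟩, fun h => absurd h hx⟩
  choose g hg' hg using key
  clear hg'
  -- the ambient sets
  set F : Finset (Finset ℕ) := hfin.toFinset with hF
  set D : Finset ℕ := Finset.range n \ (b₀ : Finset ℕ) with hD
  have hb₀V := hU b₀.2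
  -- every x ∈ D lies in some member of U
  have hex : ∀ x ∈ D, ∃ b' : U, x ∈ (b' : Finset ℕ) := by
    intro x hx
    have hxr : x ∈ Finset.range n := (Finset.mem_sdiff.mp hx).1
    have : x ∈ unionAll U := by rw [heq]; exact hxr
    obtain ⟨b, hbU, hxb⟩ := by simpa [unionAll] using this
    exact ⟨⟨b, hbU⟩, hxb⟩
  -- the map x ↦ g x is injective on D into F.erase b₀
  have hmaps : ∀ x ∈ D, (g x : Finset ℕ) ∈ F.erase (b₀ : Finset ℕ) := by
    intro x hx
    obtain ⟨hxg, -⟩ := hg x (hex x hx)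
    refine Finset.mem_erase.mpr ⟨?_, ?_⟩
    · intro hgb
      exact (Finset.mem_sdiff.mp hx).2 (hgb ▸ hxg)
    · simpa [hF] using (g x).2
  have hinj : Set.InjOn (fun x => ((g x : Finset ℕ))) D := by
    intro x hx y hy hxy
    obtain ⟨hxg, hxmin⟩ := hg x (hex x hx)
    obtain ⟨hyg, hymin⟩ := hg y (hex y hy)
    have hgeq : g x = g y := Subtype.ext hxy
    set b : U := g x with hb
    have hbne : b ≠ b₀ := by
      intro h
      exact (Finset.mem_sdiff.mp hx).2 (by rwa [h] at hxg)
    obtain ⟨c, hadj, hdc⟩ := keyL b hbne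
    -- x ∉ c and y ∉ c by minimality
    have hxc : x ∉ (c : Finset ℕ) := fun h => absurd (hxmin c h) (by omega)
    have hyc : y ∉ (c : Finset ℕ) := by
      intro h
      have := hymin c h
      rw [← hgeq] at this
      omega
    -- |b \ c| = 1
    have hbV := hU b.2
    have hcV := hU c.2
    have hm : 1 ≤ m := by
      rcases Nat.eq_zero_or_pos m with h0 | h; swap; · exact h
      exfalso
      apply (show (c : Finset ℕ) ≠ b ∧ ((c : Finset ℕ) ∩ b).card = m - 1 from hadj).1
      have hc0 : (c : Finset ℕ) = ∅ := Finset.card_eq_zero.mp (h0 ▸ hcV.2)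
      have hb0 : (b : Finset ℕ) = ∅ := Finset.card_eq_zero.mp (h0 ▸ hbV.2)
      rw [hc0, hb0]
    have hcard1 : ((b : Finset ℕ) \ (c : Finset ℕ)).card = 1 := by
      have h1 : (((b : Finset ℕ)) ∩ (c : Finset ℕ)).card
          + (((b : Finset ℕ)) \ (c : Finset ℕ)).card = ((b : Finset ℕ)).card :=
        Finset.card_inter_add_card_sdiff _ _
      have h2 : (((c : Finset ℕ)) ∩ (b : Finset ℕ)).card = m - 1 := (show (c : Finset ℕ) ≠ b ∧ ((c : Finset ℕ) ∩ b).card = m - 1 from hadj).2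
      rw [Finset.inter_comm] at h2
      rw [h2, hbV.2] at h1
      omega
    obtain ⟨a, ha⟩ := Finset.card_eq_one.mp hcard1
    have hxa : x ∈ ({a} : Finset ℕ) := ha ▸ Finset.mem_sdiff.mpr ⟨hxg, hxc⟩
    have hya : y ∈ ({a} : Finset ℕ) := by
      rw [← ha]
      exact Finset.mem_sdiff.mpr ⟨by rwa [hgeq], hyc⟩
    rw [Finset.mem_singleton] at hxa hya
    rw [hxa, hya]
  -- counting
  have hcount : D.card ≤ (F.erase (b₀ : Finset ℕ)).card :=
    Finset.card_le_card_of_injOn _ hmaps hinj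
  have hDcard : D.card = n - m := by
    rw [hD, Finset.card_sdiff_of_subset hb₀V.1, Finset.card_range, hb₀V.2]
  have hFcard : F.card = U.ncard := (Set.ncard_eq_toFinset_card U hfin).symm
  have hb₀F : (b₀ : Finset ℕ) ∈ F := by simpa [hF] using b₀.2
  have hU1 : 1 ≤ U.ncard := by
    rw [← hFcard]
    exact Finset.card_pos.mpr ⟨_, hb₀F⟩
  rw [Finset.card_erase_of_mem hb₀F, hFcard, hDcard] at hcount
  omega
end

section
/- Let U ⊆ V_{n,m} with |U| > 1 such that the induced subgraph G[U] of the Johnson graph J_{n,m} is connected. Then the induced subgraph G[ζ(U)] of J_{n,m+1} is connected. -/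
lemma union_mem_zeta {m : ℕ} {U : Set (Finset ℕ)} {c d : Finset ℕ}
    (hc : c ∈ U) (hd : d ∈ U) (h : (c ∩ d).card = m - 1) : c ∪ d ∈ zeta m U :=
  ⟨c, hc, d, hd, h, rfl⟩

lemma step_reach {n m : ℕ} (hm : 1 ≤ m) {U : Set (Finset ℕ)} (hU : U ⊆ Vnm n m)
    {c d e : Finset ℕ} (hc : c ∈ U) (hd : d ∈ U) (he : e ∈ U)
    (hcd : (c ∩ d).card = m - 1) (hde : (d ∩ e).card = m - 1) :
    (inducedGraph (m + 1) (zeta m U)).Reachable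
      ⟨c ∪ d, union_mem_zeta hc hd hcd⟩ ⟨d ∪ e, union_mem_zeta hd he hde⟩ := by
  have hcc : c.card = m := (hU hc).2
  have hdc : d.card = m := (hU hd).2
  have hec : e.card = m := (hU he).2
  have h1 : (c ∪ d).card = m + 1 := by
    have := Finset.card_union_add_card_inter c d; omega
  have h2 : (d ∪ e).card = m + 1 := by
    have := Finset.card_union_add_card_inter d e; omega
  by_cases heq : c ∪ d = d ∪ e
  · have h3 : (⟨c ∪ d, union_mem_zeta hc hd hcd⟩ : {x // x ∈ zeta m U}) =
        ⟨d ∪ e, union_mem_zeta hd he hde⟩ := Subtype.ext heq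
    rw [h3]
  · apply SimpleGraph.Adj.reachable
    refine ⟨heq, ?_⟩
    have hsub : d ⊆ (c ∪ d) ∩ (d ∪ e) :=
      Finset.subset_inter Finset.subset_union_right Finset.subset_union_left
    have hle1 : ((c ∪ d) ∩ (d ∪ e)).card ≤ m + 1 := by
      calc ((c ∪ d) ∩ (d ∪ e)).card ≤ (c ∪ d).card :=
            Finset.card_le_card Finset.inter_subset_left
        _ = m + 1 := h1
    have hge : m ≤ ((c ∪ d) ∩ (d ∪ e)).card := hdc ▸ Finset.card_le_card hsub
    have hne : ((c ∪ d) ∩ (d ∪ e)).card ≠ m + 1 := by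
      intro habs
      have e1 : (c ∪ d) ∩ (d ∪ e) = c ∪ d :=
        Finset.eq_of_subset_of_card_le Finset.inter_subset_left (by omega)
      have e2 : (c ∪ d) ∩ (d ∪ e) = d ∪ e :=
        Finset.eq_of_subset_of_card_le Finset.inter_subset_right (by omega)
      exact heq (e1 ▸ e2)
    simp only [Nat.add_sub_cancel]
    omega

lemma walk_reach {n m : ℕ} (hm : 1 ≤ m) {U : Set (Finset ℕ)} (hU : U ⊆ Vnm n m) :
    ∀ {d e : U} (_ : (inducedGraph m U).Walk d e) (c f : Finset ℕ)
      (hc : c ∈ U) (hf : f ∈ U) (hcd : (c ∩ (d : Finset ℕ)).card = m - 1)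
      (hef : ((e : Finset ℕ) ∩ f).card = m - 1),
    (inducedGraph (m + 1) (zeta m U)).Reachable
      ⟨c ∪ d, union_mem_zeta hc d.2 hcd⟩ ⟨(e : Finset ℕ) ∪ f, union_mem_zeta e.2 hf hef⟩ := by
  intro d e p
  induction p with
  | nil =>
    intro c f hc hf hcd hef
    exact step_reach hm hU hc (Subtype.coe_prop _) hf hcd hef
  | cons huv p ih =>
    intro c f hc hf hcd hef
    exact (step_reach hm hU hc (Subtype.coe_prop _) (Subtype.coe_prop _) hcd huv.2).trans
      (ih _ f (Subtype.coe_prop _) hf huv.2 hef)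

theorem stmt7 (n m : ℕ) (hm : 1 ≤ m) (U : Set (Finset ℕ)) (hU : U ⊆ Vnm n m)
    (hcard : 1 < U.ncard) (hconn : (inducedGraph m U).Connected) :
    (inducedGraph (m + 1) (zeta m U)).Connected := by
  have hfin : U.Finite := by
    by_contra h
    rw [Set.Infinite.ncard h] at hcard
    omega
  obtain ⟨a, b, ha, hb, hab⟩ := (Set.one_lt_ncard_iff hfin).mp hcard
  rw [SimpleGraph.connected_iff]
  constructor
  · intro x y
    obtain ⟨c, hc, d, hd, hcd, hx⟩ := x.2
    obtain ⟨e, he, f, hf, hef, hy⟩ := y.2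
    have hx' : x = ⟨c ∪ d, union_mem_zeta hc hd hcd⟩ := Subtype.ext hx
    have hy' : y = ⟨e ∪ f, union_mem_zeta he hf hef⟩ := Subtype.ext hy
    rw [hx', hy']
    obtain ⟨p⟩ := hconn.preconnected ⟨d, hd⟩ ⟨e, he⟩
    exact walk_reach hm hU p c f hc hf hcd hef
  · obtain ⟨p⟩ := hconn.preconnected ⟨a, ha⟩ ⟨b, hb⟩
    cases p with
    | nil => exact (hab rfl).elim
    | cons huv q =>
      exact ⟨⟨_, union_mem_zeta ha (Subtype.coe_prop _) huv.2⟩⟩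
end

section
/- For every connected component V of the induced subgraph G[ζ(U)] of J_{n,m+1}, there exists a set 𝒪 of connected components of G[U] such that V = ζ(⋃𝒪) = ⋃_{Z ∈ 𝒪} ζ(Z). Moreover, if V and V′ are distinct connected components of G[ζ(U)] with corresponding sets 𝒪 and 𝒪′, then 𝒪 ∩ 𝒪′ = ∅. -/
lemma inducedGraph_adj {m : ℕ} {U : Set (Finset ℕ)} (x y : U) :
    (inducedGraph m U).Adj x y ↔
      (x : Finset ℕ) ≠ (y : Finset ℕ) ∧ ((x : Finset ℕ) ∩ (y : Finset ℕ)).card = m - 1 :=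
  Iff.rfl

lemma zcard {m : ℕ} {U : Set (Finset ℕ)} (hm : 1 ≤ m) (hcard : ∀ c ∈ U, c.card = m)
    {x : Finset ℕ} (hx : x ∈ zeta m U) : x.card = m + 1 := by
  obtain ⟨c, hc, d, hd, hcd, rfl⟩ := hx
  have h := Finset.card_union_add_card_inter c d
  have h1 := hcard c hc
  have h2 := hcard d hd
  omega

lemma reach_common {m : ℕ} {U : Set (Finset ℕ)} (hm : 1 ≤ m)
    (hcard : ∀ c ∈ U, c.card = m)
    {x y c : Finset ℕ} (hx : x ∈ zeta m U) (hy : y ∈ zeta m U)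
    (hc : c ∈ U) (hcx : c ⊆ x) (hcy : c ⊆ y) :
    (inducedGraph (m + 1) (zeta m U)).Reachable ⟨x, hx⟩ ⟨y, hy⟩ := by
  by_cases hxy : x = y
  · subst hxy; rfl
  · apply SimpleGraph.Adj.reachable
    show x ≠ y ∧ (x ∩ y).card = m + 1 - 1
    have hxc : x.card = m + 1 := zcard hm hcard hx
    have hyc : y.card = m + 1 := zcard hm hcard hy
    have h1 : m ≤ (x ∩ y).card := by
      have hsub : c ⊆ x ∩ y := Finset.subset_inter hcx hcy
      calc m = c.card := (hcard c hc).symm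
        _ ≤ _ := Finset.card_le_card hsub
    have h2 : (x ∩ y).card ≤ m + 1 := hxc ▸ Finset.card_le_card Finset.inter_subset_left
    have h3 : (x ∩ y).card ≠ m + 1 := by
      intro h
      have hxe : x ∩ y = x :=
        Finset.eq_of_subset_of_card_le Finset.inter_subset_left (by omega)
      have hxy' : x ⊆ y := by rw [← hxe]; exact Finset.inter_subset_right
      exact hxy (Finset.eq_of_subset_of_card_le hxy' (by omega))
    exact ⟨hxy, by omega⟩

lemma reach_of_walk {m : ℕ} {U : Set (Finset ℕ)} (hm : 1 ≤ m)
    (hcard : ∀ c ∈ U, c.card = m) :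
    ∀ {c d : U}, (inducedGraph m U).Walk c d → ∀ (x y : Finset ℕ)
    (hx : x ∈ zeta m U) (hy : y ∈ zeta m U),
    (c : Finset ℕ) ⊆ x → (d : Finset ℕ) ⊆ y →
    (inducedGraph (m + 1) (zeta m U)).Reachable ⟨x, hx⟩ ⟨y, hy⟩ := by
  intro c d p
  induction p with
  | @nil u => exact fun x y hx hy hcx hdy => reach_common hm hcard hx hy u.2 hcx hdy
  | @cons u v w h p ih =>
    intro x y hx hy hcx hdy
    have hz : (↑u ∪ ↑v : Finset ℕ) ∈ zeta m U := ⟨u, u.2, v, v.2, h.2, rfl⟩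
    exact (reach_common hm hcard hx hz u.2 hcx Finset.subset_union_left).trans
      (ih (↑u ∪ ↑v) y hz hy Finset.subset_union_right hdy)

theorem stmt9 (n m : ℕ) (hm : 1 ≤ m) (U : Set (Finset ℕ)) (hU : U ⊆ Vnm n m) :
    ∃ f : Set (Finset ℕ) → Set (Set (Finset ℕ)),
      (∀ V ∈ componentSets (m + 1) (zeta m U),
        f V ⊆ componentSets m U ∧
        V = zeta m (⋃₀ f V) ∧
        V = ⋃ Z ∈ f V, zeta m Z) ∧
      (∀ V ∈ componentSets (m + 1) (zeta m U),
       ∀ V' ∈ componentSets (m + 1) (zeta m U),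
        V ≠ V' → f V ∩ f V' = ∅) := by
  classical
  have hcard : ∀ c ∈ U, c.card = m := fun c hc => (hU hc).2
  set G1 := inducedGraph m U with hG1
  set G2 := inducedGraph (m + 1) (zeta m U) with hG2
  -- every component set is contained in U
  have hZU : ∀ Z ∈ componentSets m U, Z ⊆ U := by
    rintro Z ⟨C, rfl⟩ c ⟨a, _, rfl⟩
    exact a.2
  -- monotonicity of zeta
  have hzmono : ∀ {Z : Set (Finset ℕ)}, Z ⊆ U → zeta m Z ⊆ zeta m U := by
    rintro Z hZ x ⟨c, hc, d, hd, h1, h2⟩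
    exact ⟨c, hZ hc, d, hZ hd, h1, h2⟩
  -- two members of the same component of G1 are reachable
  have hreachZ : ∀ Z ∈ componentSets m U, ∀ c ∈ Z, ∀ d ∈ Z,
      ∀ (hc : c ∈ U) (hd : d ∈ U), G1.Reachable ⟨c, hc⟩ ⟨d, hd⟩ := by
    rintro Z ⟨C, rfl⟩ c ⟨a, ha, rfl⟩ d ⟨b, hb, rfl⟩ hc hd
    have : G1.connectedComponentMk ⟨(a : Finset ℕ), hc⟩ =
        G1.connectedComponentMk ⟨(b : Finset ℕ), hd⟩ := by
      have ea : (⟨(a : Finset ℕ), hc⟩ : U) = a := Subtype.ext rfl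
      have eb : (⟨(b : Finset ℕ), hd⟩ : U) = b := Subtype.ext rfl
      rw [ea, eb, ha, hb]
    exact (SimpleGraph.ConnectedComponent.eq).mp this
  -- adjacency in G1 from the zeta condition
  have hadj : ∀ {c d : Finset ℕ} (hc : c ∈ U) (hd : d ∈ U),
      (c ∩ d).card = m - 1 → G1.Adj ⟨c, hc⟩ ⟨d, hd⟩ := by
    intro c d hc hd h1
    refine ⟨?_, h1⟩
    intro he
    have : (c ∩ d).card = m := by
      simp only [Subtype.mk.injEq] at he
      rw [he, Finset.inter_self, hcard d hd]
    omega
  -- key: any two members of zeta m Z are G2-reachable, for Z a component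
  have hZV : ∀ Z ∈ componentSets m U, ∀ x x' : Finset ℕ,
      x ∈ zeta m Z → x' ∈ zeta m Z →
      ∀ (hx : x ∈ zeta m U) (hx' : x' ∈ zeta m U),
      G2.Reachable ⟨x, hx⟩ ⟨x', hx'⟩ := by
    rintro Z hZ x x' ⟨c, hc, d, hd, h1, rfl⟩ ⟨c', hc', d', hd', h1', rfl⟩ hx hx'
    have hcU : c ∈ U := hZU Z hZ hc
    have hc'U : c' ∈ U := hZU Z hZ hc'
    obtain ⟨p⟩ := hreachZ Z hZ c hc c' hc' hcU hc'U
    exact reach_of_walk hm hcard p _ _ hx hx'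
      Finset.subset_union_left Finset.subset_union_left
  -- membership in a component set of G2
  have hVmem : ∀ (C : G2.ConnectedComponent) (x : Finset ℕ),
      x ∈ (Subtype.val '' {y : ↥(zeta m U) | G2.connectedComponentMk y = C}) ↔
      ∃ hx : x ∈ zeta m U, G2.connectedComponentMk ⟨x, hx⟩ = C := by
    intro C x
    constructor
    · rintro ⟨⟨x', hx'⟩, h1, rfl⟩
      exact ⟨hx', h1⟩
    · rintro ⟨hx, h1⟩
      exact ⟨⟨x, hx⟩, h1, rfl⟩
  -- the component of c as a member of componentSets m U, containing c and d whenever adjacent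
  have hcompmem : ∀ {Z : Set (Finset ℕ)}, Z ∈ componentSets m U → ∀ {c : Finset ℕ}
      (hc : c ∈ U), c ∈ Z → ∀ {d : Finset ℕ} (hd : d ∈ U),
      G1.Reachable ⟨c, hc⟩ ⟨d, hd⟩ → d ∈ Z := by
    rintro Z ⟨C, rfl⟩ c hc ⟨a, ha, hav⟩ d hd hr
    refine ⟨⟨d, hd⟩, ?_, rfl⟩
    have : G1.connectedComponentMk ⟨c, hc⟩ = C := by
      have : a = ⟨c, hc⟩ := Subtype.ext hav
      rw [← ha, this]
    rw [← this]
    exact (SimpleGraph.ConnectedComponent.eq).mpr hr.symm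
  -- distinct component sets of G1 are disjoint
  have hdisj : ∀ Z ∈ componentSets m U, ∀ Z' ∈ componentSets m U,
      ∀ c, c ∈ Z → c ∈ Z' → Z = Z' := by
    rintro Z ⟨C, rfl⟩ Z' ⟨C', rfl⟩ c ⟨a, ha, hav⟩ ⟨b, hb, hbv⟩
    have : a = b := Subtype.ext (hav.trans hbv.symm)
    rw [← ha, ← hb, this]
  refine ⟨fun V => {Z | Z ∈ componentSets m U ∧ ∃ x, x ∈ zeta m Z ∧ x ∈ V}, ?_, ?_⟩
  · rintro V ⟨C, rfl⟩
    set V := Subtype.val '' {y : ↥(zeta m U) | G2.connectedComponentMk y = C} with hV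
    -- zeta m Z ⊆ V for Z in f V
    have hZinV : ∀ Z, Z ∈ componentSets m U → (∃ x₀, x₀ ∈ zeta m Z ∧ x₀ ∈ V) →
        ∀ x, x ∈ zeta m Z → x ∈ V := by
      rintro Z hZ ⟨x₀, hx₀Z, hx₀V⟩ x hxZ
      obtain ⟨hx₀, hmk₀⟩ := (hVmem C x₀).mp hx₀V
      have hx : x ∈ zeta m U := hzmono (hZU Z hZ) hxZ
      refine (hVmem C x).mpr ⟨hx, ?_⟩
      rw [← hmk₀]
      exact (SimpleGraph.ConnectedComponent.eq).mpr (hZV Z hZ x x₀ hxZ hx₀Z hx hx₀)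
    -- every x ∈ V lies in zeta m Z₀ for some Z₀ ∈ f V
    have hcover : ∀ x, x ∈ V → ∃ Z₀, (Z₀ ∈ componentSets m U ∧ ∃ x', x' ∈ zeta m Z₀ ∧ x' ∈ V)
        ∧ x ∈ zeta m Z₀ := by
      intro x hxV
      obtain ⟨hx, hmk⟩ := (hVmem C x).mp hxV
      obtain ⟨c, hcU, d, hdU, h1, hxeq⟩ := hx
      set Z₀ := Subtype.val ''
        {y : U | G1.connectedComponentMk y = G1.connectedComponentMk ⟨c, hcU⟩} with hZ₀
      have hZ₀mem : Z₀ ∈ componentSets m U := ⟨_, rfl⟩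
      have hcZ₀ : c ∈ Z₀ := ⟨⟨c, hcU⟩, rfl, rfl⟩
      have hdZ₀ : d ∈ Z₀ :=
        hcompmem hZ₀mem hcU hcZ₀ hdU (hadj hcU hdU h1).reachable
      have hxZ₀ : x ∈ zeta m Z₀ := ⟨c, hcZ₀, d, hdZ₀, h1, hxeq⟩
      exact ⟨Z₀, ⟨hZ₀mem, x, hxZ₀, hxV⟩, hxZ₀⟩
    refine ⟨fun Z hZ => hZ.1, ?_, ?_⟩
    · apply Set.eq_of_subset_of_subset
      · intro x hxV
        obtain ⟨Z₀, hZ₀f, hxZ₀⟩ := hcover x hxV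
        obtain ⟨c, hc, d, hd, h1, hxeq⟩ := hxZ₀
        exact ⟨c, ⟨Z₀, hZ₀f, hc⟩, d, ⟨Z₀, hZ₀f, hd⟩, h1, hxeq⟩
      · rintro x ⟨c, ⟨Z, hZf, hcZ⟩, d, ⟨Z', hZ'f, hdZ'⟩, h1, hxeq⟩
        have hcU : c ∈ U := hZU Z hZf.1 hcZ
        have hdU : d ∈ U := hZU Z' hZ'f.1 hdZ'
        have hdZ : d ∈ Z :=
          hcompmem hZf.1 hcU hcZ hdU (hadj hcU hdU h1).reachable
        have hxZ : x ∈ zeta m Z := ⟨c, hcZ, d, hdZ, h1, hxeq⟩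
        exact hZinV Z hZf.1 hZf.2 x hxZ
    · apply Set.eq_of_subset_of_subset
      · intro x hxV
        obtain ⟨Z₀, hZ₀f, hxZ₀⟩ := hcover x hxV
        exact Set.mem_biUnion hZ₀f hxZ₀
      · intro x hx
        simp only [Set.mem_iUnion] at hx
        obtain ⟨Z, hZf, hxZ⟩ := hx
        exact hZinV Z hZf.1 hZf.2 x hxZ
  · rintro V ⟨C, rfl⟩ V' ⟨C', rfl⟩ hne
    by_contra h
    obtain ⟨Z, hZ1, hZ2⟩ := Set.nonempty_iff_ne_empty.mpr h
    obtain ⟨hZmem, x, hxZ, hxV⟩ := hZ1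
    obtain ⟨_, x', hx'Z, hx'V'⟩ := hZ2
    obtain ⟨hx, hmk⟩ := (hVmem C x).mp hxV
    obtain ⟨hx', hmk'⟩ := (hVmem C' x').mp hx'V'
    have : C = C' := by
      rw [← hmk, ← hmk']
      exact (SimpleGraph.ConnectedComponent.eq).mpr (hZV Z hZmem x x' hxZ hx'Z hx hx')
    exact hne (by rw [this])
end

section
/- Let U ⊆ V_{n,m}, let 𝒰 be the set of connected components of G[U], and let 0 ≤ s ≤ n - m. For every connected component V of the induced subgraph G[ζ^s(U)], there exists a subset 𝒪 ⊆ 𝒰 such that |⋃V| ≤ m - 1 + Σ_{Z ∈ 𝒪} |Z|; furthermore, distinct connected components of G[ζ^s(U)] can be assigned pairwise disjoint such subsets 𝒪. -/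
open SimpleGraph

open Finset in
/-- Core counting lemma: a "connected-by-rank" family of finsets has small union. -/
lemma johnson_core {ι : Type*} [DecidableEq ι] (A : ι → Finset ℕ) (b : ι → ℕ) (rank : ι → ℕ) :
    ∀ (s : Finset ι), ∀ i0 ∈ s,
      (∀ i ∈ s, i ≠ i0 → ∃ j ∈ s, rank j < rank i ∧ (A i \ A j).card ≤ b i) →
      (s.biUnion A).card ≤ (A i0).card + ∑ i ∈ s.erase i0, b i := by
  intro s
  induction s using Finset.strongInduction with
  | _ s ih =>
    intro i0 hi0 hstep
    by_cases hs : s.erase i0 = ∅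
    · have hseq : s = {i0} := by
        apply Finset.eq_singleton_iff_unique_mem.2
        refine ⟨hi0, fun x hx => ?_⟩
        by_contra hne
        exact (Finset.eq_empty_iff_forall_notMem.1 hs x) (Finset.mem_erase.2 ⟨hne, hx⟩)
      subst hseq
      simp
    · obtain ⟨i, hi, hmax⟩ := Finset.exists_max_image (s.erase i0) rank
        (Finset.nonempty_iff_ne_empty.2 hs)
      have hi_s : i ∈ s := Finset.mem_of_mem_erase hi
      have hi_ne : i ≠ i0 := Finset.ne_of_mem_erase hi
      obtain ⟨j, hj_s, hj_rank, hj_card⟩ := hstep i hi_s hi_ne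
      have hj_ne_i : j ≠ i := fun h => lt_irrefl _ (h ▸ hj_rank)
      have hj_mem : j ∈ s.erase i := Finset.mem_erase.2 ⟨hj_ne_i, hj_s⟩
      have hstep' : ∀ i' ∈ s.erase i, i' ≠ i0 →
          ∃ j' ∈ s.erase i, rank j' < rank i' ∧ (A i' \ A j').card ≤ b i' := by
        intro i' hi' hne'
        obtain ⟨j', hj's, hr, hc⟩ := hstep i' (Finset.mem_of_mem_erase hi') hne'
        have hle : rank i' ≤ rank i :=
          hmax i' (Finset.mem_erase.2 ⟨hne', Finset.mem_of_mem_erase hi'⟩)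
        refine ⟨j', Finset.mem_erase.2 ⟨?_, hj's⟩, hr, hc⟩
        rintro rfl
        exact absurd hr (not_lt.2 hle)
      have hi0' : i0 ∈ s.erase i := Finset.mem_erase.2 ⟨Ne.symm hi_ne, hi0⟩
      have hIH := ih (s.erase i) (Finset.erase_ssubset hi_s) i0 hi0' hstep'
      have hsub : s.biUnion A ⊆ (s.erase i).biUnion A ∪ (A i \ A j) := by
        intro a ha
        simp only [Finset.mem_biUnion, Finset.mem_union, Finset.mem_sdiff] at *
        obtain ⟨x, hx, hax⟩ := ha
        by_cases hxi : x = i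
        · subst hxi
          by_cases haj : a ∈ A j
          · exact Or.inl ⟨j, hj_mem, haj⟩
          · exact Or.inr ⟨hax, haj⟩
        · exact Or.inl ⟨x, Finset.mem_erase.2 ⟨hxi, hx⟩, hax⟩
      calc (s.biUnion A).card ≤ ((s.erase i).biUnion A ∪ (A i \ A j)).card :=
            Finset.card_le_card hsub
        _ ≤ ((s.erase i).biUnion A).card + (A i \ A j).card := Finset.card_union_le _ _
        _ ≤ ((A i0).card + ∑ i' ∈ (s.erase i).erase i0, b i') + b i := add_le_add hIH hj_card
        _ = (A i0).card + ∑ i' ∈ s.erase i0, b i' := by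
            rw [add_assoc]
            congr 1
            rw [Finset.erase_right_comm, Finset.sum_erase_add _ _ hi]

lemma Vnm_finite (n m : ℕ) : (Vnm n m).Finite := by
  apply Set.Finite.subset ((Finset.range n).powerset : Finset (Finset ℕ)).finite_toSet
  intro b hb
  exact Finset.mem_coe.2 (Finset.mem_powerset.2 hb.1)

lemma zetaIter_subset (n m : ℕ) (hm : 1 ≤ m) (U : Set (Finset ℕ)) (hU : U ⊆ Vnm n m) :
    ∀ s, zetaIter m s U ⊆ Vnm n (m + s) := by
  intro s
  induction s with
  | zero => exact hU
  | succ v ihv =>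
    intro x hx
    obtain ⟨c, hc, d, hd, hcd, rfl⟩ := hx
    obtain ⟨hcr, hcc⟩ := ihv hc
    obtain ⟨hdr, hdc⟩ := ihv hd
    constructor
    · exact Finset.union_subset hcr hdr
    · have h1 := Finset.card_union_add_card_inter c d
      have : m + (v + 1) = m + v + 1 := by omega
      rw [this]
      omega

/-- Any two members of `W` contained in a common `(k+1)`-set are equal or adjacent. -/
lemma adj_or_eq_of_subset (k : ℕ) (hk : 1 ≤ k) (W : Set (Finset ℕ))
    (hW : ∀ c ∈ W, c.card = k) {x : Finset ℕ} (hx : x.card = k + 1)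
    {c c' : Finset ℕ} (hc : c ∈ W) (hc' : c' ∈ W) (h1 : c ⊆ x) (h2 : c' ⊆ x) :
    c = c' ∨ (inducedGraph k W).Adj ⟨c, hc⟩ ⟨c', hc'⟩ := by
  by_cases hcc : c = c'
  · exact Or.inl hcc
  right
  have hcard : c.card = k := hW c hc
  have hcard' : c'.card = k := hW c' hc'
  have hcu : (c ∪ c').card ≤ k + 1 := hx ▸ Finset.card_le_card (Finset.union_subset h1 h2)
  have h4 := Finset.card_union_add_card_inter c c'
  have h5 : (c ∩ c').card < k := by
    rcases lt_or_ge (c ∩ c').card k with h | h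
    · exact h
    · exfalso
      have : c ∩ c' = c := Finset.eq_of_subset_of_card_le Finset.inter_subset_left (by omega)
      have hsub : c ⊆ c' := by rw [← this]; exact Finset.inter_subset_right
      exact hcc (Finset.eq_of_subset_of_card_le hsub (by omega))
  exact (⟨by simpa using hcc, by show (c ∩ c').card = k - 1; omega⟩ : c ≠ c' ∧ (c ∩ c').card = k - 1)

/-- Two members of `W'` (all of cardinality `k+1`) sharing a common `k`-subset
are equal or adjacent in the induced graph. -/
lemma adj_or_eq_of_common (k : ℕ) (W' : Set (Finset ℕ))
    (hW' : ∀ z ∈ W', z.card = k + 1) {x y : Finset ℕ} (hx : x ∈ W') (hy : y ∈ W')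
    {c : Finset ℕ} (hc : c.card = k) (hcx : c ⊆ x) (hcy : c ⊆ y) :
    x = y ∨ (inducedGraph (k + 1) W').Adj ⟨x, hx⟩ ⟨y, hy⟩ := by
  by_cases hxy : x = y
  · exact Or.inl hxy
  right
  have hxc : x.card = k + 1 := hW' x hx
  have hyc : y.card = k + 1 := hW' y hy
  have h1 : k ≤ (x ∩ y).card := hc ▸ Finset.card_le_card (Finset.subset_inter hcx hcy)
  have h2 : (x ∩ y).card < k + 1 := by
    rcases lt_or_ge (x ∩ y).card (k + 1) with h | h
    · exact h
    · exfalso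
      have : x ∩ y = x := Finset.eq_of_subset_of_card_le Finset.inter_subset_left (by omega)
      have hsub : x ⊆ y := by rw [← this]; exact Finset.inter_subset_right
      exact hxy (Finset.eq_of_subset_of_card_le hsub (by omega))
  exact (⟨by simpa using hxy, by show (x ∩ y).card = k + 1 - 1; omega⟩ : x ≠ y ∧ (x ∩ y).card = k + 1 - 1)

/-- Lifting reachability in `G[W]` to reachability in `G[ζ(W)]`. -/
lemma reach_lift (k : ℕ) (W : Set (Finset ℕ)) (hW : ∀ c ∈ W, c.card = k)
    (hW' : ∀ z ∈ zeta k W, z.card = k + 1) :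
    ∀ {c e : W} (_ : (inducedGraph k W).Walk c e) {x y : Finset ℕ}
      (hx : x ∈ zeta k W) (hy : y ∈ zeta k W),
      (c : Finset ℕ) ⊆ x → (e : Finset ℕ) ⊆ y →
      (inducedGraph (k + 1) (zeta k W)).Reachable ⟨x, hx⟩ ⟨y, hy⟩ := by
  intro c e p
  induction p with
  | nil =>
    rename_i u
    intro x y hx hy hcx hey
    rcases adj_or_eq_of_common k _ hW' hx hy (hW u u.2) hcx hey with h | h
    · subst h; exact Reachable.refl _
    · exact h.reachable
  | @cons u v w h q ih =>
    intro x y hx hy hcx hey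
    have hz : ((u : Finset ℕ) ∪ (v : Finset ℕ)) ∈ zeta k W :=
      ⟨u, u.2, v, v.2, And.right h, rfl⟩
    have h1 : (inducedGraph (k + 1) (zeta k W)).Reachable ⟨x, hx⟩ ⟨_, hz⟩ := by
      rcases adj_or_eq_of_common k _ hW' hx hz (hW u u.2) hcx Finset.subset_union_left with
        h' | h'
      · subst h'; exact Reachable.refl _
      · exact h'.reachable
    exact h1.trans (ih hz hy Finset.subset_union_right hey)
/-- The subset of `W` corresponding to connected component `C`. -/
def compSet (k : ℕ) (W : Set (Finset ℕ)) (C : (inducedGraph k W).ConnectedComponent) :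
    Set (Finset ℕ) :=
  Subtype.val '' {x : W | (inducedGraph k W).connectedComponentMk x = C}

lemma mem_compSet {k : ℕ} {W : Set (Finset ℕ)} {C : (inducedGraph k W).ConnectedComponent}
    {c : Finset ℕ} :
    c ∈ compSet k W C ↔ ∃ h : c ∈ W, (inducedGraph k W).connectedComponentMk ⟨c, h⟩ = C := by
  constructor
  · rintro ⟨x, hx, rfl⟩
    exact ⟨x.2, hx⟩
  · rintro ⟨h, hc⟩
    exact ⟨⟨c, h⟩, hc, rfl⟩

lemma compSet_subset {k : ℕ} {W : Set (Finset ℕ)} {C : (inducedGraph k W).ConnectedComponent} :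
    compSet k W C ⊆ W := by
  rintro c ⟨x, _, rfl⟩
  exact x.2

lemma mem_componentSets_iff {k : ℕ} {W : Set (Finset ℕ)} {V : Set (Finset ℕ)} :
    V ∈ componentSets k W ↔ ∃ C, V = compSet k W C := Iff.rfl

lemma compSet_nonempty {k : ℕ} {W : Set (Finset ℕ)} (C : (inducedGraph k W).ConnectedComponent) :
    ∃ x : W, (inducedGraph k W).connectedComponentMk x = C ∧ (x : Finset ℕ) ∈ compSet k W C := by
  obtain ⟨x, hx⟩ := C.exists_rep
  exact ⟨x, hx, ⟨x, hx, rfl⟩⟩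

lemma compSet_inj {k : ℕ} {W : Set (Finset ℕ)} {C C' : (inducedGraph k W).ConnectedComponent}
    (h : compSet k W C = compSet k W C') : C = C' := by
  obtain ⟨x, hx, hmem⟩ := compSet_nonempty C
  rw [h, mem_compSet] at hmem
  obtain ⟨h1, h2⟩ := hmem
  rw [← hx, ← h2]

/-- The union bound for a single connected component. -/
lemma comp_union_bound (n k : ℕ) (hk : 1 ≤ k) (W : Set (Finset ℕ)) (hW : W ⊆ Vnm n k)
    (C : (inducedGraph k W).ConnectedComponent) :
    (unionAll (compSet k W C)).ncard ≤ k - 1 + (compSet k W C).ncard := by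
  classical
  have hWfin : W.Finite := (Vnm_finite n k).subset hW
  obtain ⟨x0, hx0, hx0mem'⟩ := compSet_nonempty C
  have hVfin : (compSet k W C).Finite := hWfin.subset compSet_subset
  set F : Finset (Finset ℕ) := hVfin.toFinset with hF
  have hx0mem : (x0 : Finset ℕ) ∈ F := hVfin.mem_toFinset.2 hx0mem'
  set rank : Finset ℕ → ℕ :=
    fun c => if h : c ∈ W then (inducedGraph k W).dist x0 ⟨c, h⟩ else 0 with hrank
  have hstep : ∀ i ∈ F, i ≠ (x0 : Finset ℕ) →
      ∃ j ∈ F, rank j < rank i ∧ (id i \ id j).card ≤ 1 := by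
    intro i hi hne
    rw [hVfin.mem_toFinset, mem_compSet] at hi
    obtain ⟨hiW, hiC⟩ := hi
    set xi : W := ⟨i, hiW⟩ with hxi
    have hreach : (inducedGraph k W).Reachable x0 xi :=
      ConnectedComponent.exact (by rw [hx0, hiC])
    have hne' : x0 ≠ xi := by
      intro h
      apply hne
      rw [h]
    have hd : 0 < (inducedGraph k W).dist x0 xi := hreach.pos_dist_of_ne hne'
    obtain ⟨p, hp⟩ := hreach.exists_walk_length_eq_dist
    have hnn : ¬ p.reverse.Nil := SimpleGraph.Walk.not_nil_of_ne (Ne.symm hne')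
    obtain ⟨y, hadj, q, hq⟩ := SimpleGraph.Walk.not_nil_iff.1 hnn
    have hylen : (inducedGraph k W).dist x0 y ≤ p.length - 1 := by
      have h1 : p.reverse.length = p.length := SimpleGraph.Walk.length_reverse p
      have h2 : q.length + 1 = p.length := by
        rw [← h1, hq, SimpleGraph.Walk.length_cons]
      calc (inducedGraph k W).dist x0 y = (inducedGraph k W).dist y x0 :=
            SimpleGraph.dist_comm
        _ ≤ q.length := SimpleGraph.dist_le q
        _ = p.length - 1 := by omega
    have hyC : (inducedGraph k W).connectedComponentMk y = C := by
      rw [← hiC]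
      exact ConnectedComponent.sound hadj.symm.reachable
    have hyF : (y : Finset ℕ) ∈ F := hVfin.mem_toFinset.2 (mem_compSet.2 ⟨y.2, by
      simpa using hyC⟩)
    refine ⟨(y : Finset ℕ), hyF, ?_, ?_⟩
    · have h1 : rank (y : Finset ℕ) = (inducedGraph k W).dist x0 y := by
        rw [hrank]
        simp only [y.2, dif_pos]
      have h2 : rank i = (inducedGraph k W).dist x0 xi := by
        rw [hrank]
        simp only [dif_pos hiW]
        rfl
      rw [h1, h2]
      omega
    · -- adjacency: |xi \ y| = 1
      have hadj' := hadj  -- Adj xi y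
      have hcardi : i.card = k := (hW hiW).2
      have hcardy : (y : Finset ℕ).card = k := (hW y.2).2
      have hint : ((xi : Finset ℕ) ∩ (y : Finset ℕ)).card = k - 1 := And.right hadj
      have hsd := Finset.card_sdiff_add_card_inter (i : Finset ℕ) (y : Finset ℕ)
      simp only [id]
      have : ((xi : Finset ℕ) ∩ (y : Finset ℕ)).card = (i ∩ (y : Finset ℕ)).card := rfl
      omega
  have hcore := johnson_core id (fun _ => 1) rank F (x0 : Finset ℕ) hx0mem hstep
  have hunion : unionAll (compSet k W C) = ↑(F.biUnion id) := by
    rw [Finset.coe_biUnion]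
    simp only [hF, hVfin.coe_toFinset, id]
    rfl
  have hcard : (unionAll (compSet k W C)).ncard = (F.biUnion id).card := by
    rw [hunion, Set.ncard_coe_finset]
  have hVcard : (compSet k W C).ncard = F.card := by
    rw [Set.ncard_eq_toFinset_card _ hVfin]
  have hFpos : 1 ≤ F.card := Finset.card_pos.2 ⟨_, hx0mem⟩
  have hsum : ∑ i ∈ F.erase (x0 : Finset ℕ), (fun _ => 1) i = F.card - 1 := by
    rw [Finset.sum_const, smul_eq_mul, mul_one, Finset.card_erase_of_mem hx0mem]
  have hx0card : (id (x0 : Finset ℕ)).card = k := (hW x0.2).2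
  rw [hcard, hVcard]
  rw [hsum, hx0card] at hcore
  omega
lemma johnson_step (n k m : ℕ) (hm : 1 ≤ m) (hmk : m ≤ k) (W : Set (Finset ℕ))
    (hWsub : W ⊆ Vnm n k) (𝒰 : Set (Set (Finset ℕ)))
    (f : Set (Finset ℕ) → Set (Set (Finset ℕ)))
    (hf1 : ∀ V ∈ componentSets k W, f V ⊆ 𝒰 ∧ (f V).Finite ∧
      (unionAll V).ncard ≤ m - 1 + ∑ᶠ Z ∈ f V, Set.ncard Z)
    (hf2 : ∀ V ∈ componentSets k W, ∀ V' ∈ componentSets k W, V ≠ V' → f V ∩ f V' = ∅) :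
    ∃ f' : Set (Finset ℕ) → Set (Set (Finset ℕ)),
      (∀ V ∈ componentSets (k + 1) (zeta k W), f' V ⊆ 𝒰 ∧ (f' V).Finite ∧
        (unionAll V).ncard ≤ m - 1 + ∑ᶠ Z ∈ f' V, Set.ncard Z) ∧
      (∀ V ∈ componentSets (k + 1) (zeta k W), ∀ V' ∈ componentSets (k + 1) (zeta k W),
        V ≠ V' → f' V ∩ f' V' = ∅) := by
  classical
  have hk : 1 ≤ k := le_trans hm hmk
  have hWcard : ∀ c ∈ W, c.card = k := fun c hc => (hWsub hc).2
  have hW'sub : zeta k W ⊆ Vnm n (k + 1) := by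
    rintro x ⟨c, hc, d, hd, hcd, rfl⟩
    obtain ⟨hcr, hcc⟩ := hWsub hc
    obtain ⟨hdr, hdc⟩ := hWsub hd
    refine ⟨Finset.union_subset hcr hdr, ?_⟩
    have h1 := Finset.card_union_add_card_inter c d
    omega
  have hW'card : ∀ z ∈ zeta k W, z.card = k + 1 := fun z hz => (hW'sub hz).2
  have hWfin : W.Finite := (Vnm_finite n k).subset hWsub
  haveI : Finite ↥W := hWfin.to_subtype
  haveI : Finite ↥(zeta k W) := (((Vnm_finite n (k + 1)).subset hW'sub)).to_subtype
  set G := inducedGraph k W with hG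
  set G' := inducedGraph (k + 1) (zeta k W) with hG'
  -- a chosen member of `W` below each element of `ζ(W)`
  have hbase : ∀ x : ↥(zeta k W), ∃ c, c ∈ W ∧ c ⊆ (x : Finset ℕ) := by
    intro x
    obtain ⟨c, hc, d, hd, hcd, hx⟩ := x.2
    exact ⟨c, hc, hx ▸ Finset.subset_union_left⟩
  choose cf hcfW hcfsub using hbase
  set compOf : ↥(zeta k W) → G.ConnectedComponent :=
    fun x => G.connectedComponentMk ⟨cf x, hcfW x⟩ with hcompOf
  have key1 : ∀ (x : ↥(zeta k W)) (c : Finset ℕ) (hc : c ∈ W), c ⊆ (x : Finset ℕ) →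
      G.connectedComponentMk ⟨c, hc⟩ = compOf x := by
    intro x c hc hsub
    rcases adj_or_eq_of_subset k hk W hWcard (hW'card _ x.2) hc (hcfW x) hsub (hcfsub x) with
      h | h
    · rw [hcompOf]
      congr 1
      exact Subtype.ext h
    · exact ConnectedComponent.connectedComponentMk_eq_of_adj h
  have key2 : ∀ x y : ↥(zeta k W), compOf x = compOf y →
      G'.connectedComponentMk x = G'.connectedComponentMk y := by
    intro x y h
    obtain ⟨p⟩ := ConnectedComponent.exact h
    exact ConnectedComponent.sound
      (reach_lift k W hWcard hW'card p x.2 y.2 (hcfsub x) (hcfsub y))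
  set fiber : G'.ConnectedComponent → Set (G.ConnectedComponent) :=
    fun D => {C | ∃ x : ↥(zeta k W), G'.connectedComponentMk x = D ∧ compOf x = C} with hfiber
  have hfib_disj : ∀ D D', D ≠ D' → ∀ C, C ∈ fiber D → C ∈ fiber D' → False := by
    rintro D D' hDD' C ⟨x, hxD, hxC⟩ ⟨y, hyD, hyC⟩
    exact hDD' (by rw [← hxD, ← hyD, key2 x y (hxC.trans hyC.symm)])
  have hCfin : ∀ C : G.ConnectedComponent, (compSet k W C).Finite :=
    fun C => hWfin.subset compSet_subset
  set A : G.ConnectedComponent → Finset ℕ :=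
    fun C => (hCfin C).toFinset.biUnion id with hA
  have hA_coe : ∀ C, unionAll (compSet k W C) = ↑(A C) := by
    intro C
    rw [hA]
    rw [Finset.coe_biUnion]
    simp only [(hCfin C).coe_toFinset, id]
    rfl
  have hA_card : ∀ C, (unionAll (compSet k W C)).ncard = (A C).card := by
    intro C
    rw [hA_coe C, Set.ncard_coe_finset]
  have hmemA : ∀ (a : ℕ) (C), a ∈ A C ↔ ∃ b ∈ compSet k W C, a ∈ b := by
    intro a C
    rw [hA]
    simp [Set.Finite.mem_toFinset]
  have hxsubA : ∀ x : ↥(zeta k W), (x : Finset ℕ) ⊆ A (compOf x) := by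
    intro x a ha
    obtain ⟨c, hc, d, hd, hcd, hxeq⟩ := x.2
    have hcx : c ⊆ (x : Finset ℕ) := hxeq ▸ Finset.subset_union_left
    have hdx : d ⊆ (x : Finset ℕ) := hxeq ▸ Finset.subset_union_right
    have hmm : a ∈ c ∪ d := by rw [← hxeq]; exact ha
    rcases Finset.mem_union.1 hmm with h | h
    · exact (hmemA a _).2 ⟨c, mem_compSet.2 ⟨hc, key1 x c hc hcx⟩, h⟩
    · exact (hmemA a _).2 ⟨d, mem_compSet.2 ⟨hd, key1 x d hd hdx⟩, h⟩
  -- sums over the old components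
  set σ : G.ConnectedComponent → ℕ :=
    fun C => ∑ᶠ Z ∈ f (compSet k W C), Set.ncard Z with hσ
  have hIH : ∀ C, (A C).card ≤ m - 1 + σ C := by
    intro C
    have h := (hf1 (compSet k W C) ⟨C, rfl⟩).2.2
    rw [hA_card C] at h
    exact h
  -- the new assignment
  refine ⟨fun V => if h : V ∈ componentSets (k + 1) (zeta k W)
    then ⋃ C ∈ fiber ((mem_componentSets_iff.1 h).choose), f (compSet k W C) else ∅, ?_, ?_⟩
  · intro V hV
    simp only [dif_pos hV]
    set D := (mem_componentSets_iff.1 hV).choose with hD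
    have hVD : V = compSet (k + 1) (zeta k W) D := (mem_componentSets_iff.1 hV).choose_spec
    have hmemf : ∀ C ∈ fiber D, compSet k W C ∈ componentSets k W := fun C _ => ⟨C, rfl⟩
    have hfibfin : (fiber D).Finite := Set.toFinite _
    refine ⟨?_, ?_, ?_⟩
    · exact Set.iUnion₂_subset fun C hC => (hf1 _ (hmemf C hC)).1
    · exact Set.Finite.biUnion hfibfin fun C hC => (hf1 _ (hmemf C hC)).2.1
    · -- the cardinality bound
      obtain ⟨x0, hx0D, _⟩ := compSet_nonempty D
      have hC0fib : compOf x0 ∈ fiber D := ⟨x0, hx0D, rfl⟩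
      set Ffib : Finset (G.ConnectedComponent) := hfibfin.toFinset with hFfib
      have hC0mem : compOf x0 ∈ Ffib := hfibfin.mem_toFinset.2 hC0fib
      set rank : G.ConnectedComponent → ℕ := fun C =>
        sInf {d | ∃ x : ↥(zeta k W),
          G'.connectedComponentMk x = D ∧ compOf x = C ∧ G'.dist x0 x = d} with hrank
      have hstep : ∀ C ∈ Ffib, C ≠ compOf x0 → ∃ C' ∈ Ffib, rank C' < rank C ∧
          (A C \ A C').card ≤ (A C).card - k := by
        intro C hC hne
        obtain ⟨x, hxD, hxC⟩ := hfibfin.mem_toFinset.1 hC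
        have hne' : ({d | ∃ x : ↥(zeta k W),
            G'.connectedComponentMk x = D ∧ compOf x = C ∧ G'.dist x0 x = d} : Set ℕ).Nonempty :=
          ⟨G'.dist x0 x, x, hxD, hxC, rfl⟩
        obtain ⟨y', hy'D, hy'C, hy'd⟩ := Nat.sInf_mem hne'
        have hyne : y' ≠ x0 := by
          rintro rfl
          exact hne (hy'C ▸ rfl)
        have hreach : G'.Reachable x0 y' := ConnectedComponent.exact (hx0D.trans hy'D.symm)
        have hd : 0 < G'.dist x0 y' := hreach.pos_dist_of_ne (Ne.symm hyne)
        obtain ⟨p, hp⟩ := hreach.exists_walk_length_eq_dist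
        have hnn : ¬ p.reverse.Nil := SimpleGraph.Walk.not_nil_of_ne hyne
        obtain ⟨z, hadj, q, hq⟩ := SimpleGraph.Walk.not_nil_iff.1 hnn
        have hzlen : G'.dist x0 z ≤ p.length - 1 := by
          have h1 : p.reverse.length = p.length := SimpleGraph.Walk.length_reverse p
          have h2 : q.length + 1 = p.length := by
            rw [← h1, hq, SimpleGraph.Walk.length_cons]
          calc G'.dist x0 z = G'.dist z x0 := SimpleGraph.dist_comm
            _ ≤ q.length := SimpleGraph.dist_le q
            _ = p.length - 1 := by omega
        have hzD : G'.connectedComponentMk z = D := by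
          rw [← hy'D]
          exact ConnectedComponent.sound hadj.symm.reachable
        set C' := compOf z with hC'
        have hC'fib : C' ∈ fiber D := ⟨z, hzD, rfl⟩
        refine ⟨C', hfibfin.mem_toFinset.2 hC'fib, ?_, ?_⟩
        · have h1 : rank C' ≤ G'.dist x0 z := Nat.sInf_le ⟨z, hzD, rfl, rfl⟩
          have h2 : rank C = G'.dist x0 y' := hy'd.symm
          omega
        · have hxA : (y' : Finset ℕ) ⊆ A C := hy'C ▸ hxsubA y'
          have hzA : (z : Finset ℕ) ⊆ A C' := hxsubA z
          have hint : ((y' : Finset ℕ) ∩ (z : Finset ℕ)).card = k := by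
            have h := And.right hadj
            simpa using h
          have hsub : (y' : Finset ℕ) ∩ (z : Finset ℕ) ⊆ A C ∩ A C' :=
            Finset.inter_subset_inter hxA hzA
          have h1 : k ≤ (A C ∩ A C').card := hint ▸ Finset.card_le_card hsub
          have h2 := Finset.card_sdiff_add_card_inter (A C) (A C')
          omega
      have hcore := johnson_core A (fun C => (A C).card - k) rank Ffib (compOf x0) hC0mem hstep
      -- union of V is inside the big biUnion
      have hsub : unionAll V ⊆ ↑(Ffib.biUnion A) := by
        intro a ha
        obtain ⟨b, hbV, hab⟩ := by
          simpa [unionAll, Set.mem_iUnion] using ha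
        rw [hVD] at hbV
        obtain ⟨hbW', hbD⟩ := mem_compSet.1 hbV
        set x : ↥(zeta k W) := ⟨b, hbW'⟩ with hx
        have hCx : compOf x ∈ fiber D := ⟨x, hbD, rfl⟩
        refine Finset.mem_coe.2 (Finset.mem_biUnion.2 ⟨compOf x, hfibfin.mem_toFinset.2 hCx, ?_⟩)
        exact hxsubA x hab
      have hUcard : (unionAll V).ncard ≤ (Ffib.biUnion A).card := by
        rw [← Set.ncard_coe_finset]
        exact Set.ncard_le_ncard hsub (Ffib.biUnion A).finite_toSet
      -- sum over the fiber
      have hterm : ∀ C, (A C).card - k ≤ σ C := by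
        intro C
        have := hIH C
        omega
      have hsum1 : ∑ C ∈ Ffib.erase (compOf x0), ((A C).card - k) ≤
          ∑ C ∈ Ffib.erase (compOf x0), σ C :=
        Finset.sum_le_sum fun C _ => hterm C
      have hsum2 : σ (compOf x0) + ∑ C ∈ Ffib.erase (compOf x0), σ C = ∑ C ∈ Ffib, σ C :=
        Finset.add_sum_erase Ffib σ hC0mem
      have hdisj : (fiber D).PairwiseDisjoint (fun C => f (compSet k W C)) := by
        intro C hC C' hC' hne
        refine Set.disjoint_iff_inter_eq_empty.2 ?_
        exact hf2 _ ⟨C, rfl⟩ _ ⟨C', rfl⟩ (fun h => hne (compSet_inj h))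
      have hsum3 : ∑ᶠ Z ∈ ⋃ C ∈ fiber D, f (compSet k W C), Set.ncard Z =
          ∑ᶠ C ∈ fiber D, σ C :=
        finsum_mem_biUnion hdisj hfibfin fun C hC => (hf1 _ (hmemf C hC)).2.1
      have hsum4 : ∑ᶠ C ∈ fiber D, σ C = ∑ C ∈ Ffib, σ C := by
        rw [← hfibfin.coe_toFinset, finsum_mem_coe_finset]
      have hfinal := hIH (compOf x0)
      have hcore2 : (Ffib.biUnion A).card ≤
          (A (compOf x0)).card + ∑ C ∈ Ffib.erase (compOf x0), ((A C).card - k) := hcore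
      rw [hsum3, hsum4]
      omega
  · intro V hV V'' hV'' hne
    simp only [dif_pos hV, dif_pos hV'']
    set D := (mem_componentSets_iff.1 hV).choose with hD
    have hVD : V = compSet (k + 1) (zeta k W) D := (mem_componentSets_iff.1 hV).choose_spec
    set D'' := (mem_componentSets_iff.1 hV'').choose with hD''
    have hVD'' : V'' = compSet (k + 1) (zeta k W) D'' :=
      (mem_componentSets_iff.1 hV'').choose_spec
    have hDne : D ≠ D'' := by
      intro h
      exact hne (by rw [hVD, hVD'', h])
    ext Z
    simp only [Set.mem_inter_iff, Set.mem_iUnion, Set.mem_empty_iff_false, iff_false,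
      not_and]
    rintro ⟨C, hC, hZ1⟩ ⟨C'', hC'', hZ2⟩
    by_cases hCC : C = C''
    · exact hfib_disj D D'' hDne C hC (hCC ▸ hC'')
    · have h : f (compSet k W C) ∩ f (compSet k W C'') = ∅ :=
        hf2 _ ⟨C, rfl⟩ _ ⟨C'', rfl⟩ (fun h => hCC (compSet_inj h))
      have : Z ∈ f (compSet k W C) ∩ f (compSet k W C'') := ⟨hZ1, hZ2⟩
      rw [h] at this
      exact this

lemma johnson_main (n m : ℕ) (hm : 1 ≤ m) (U : Set (Finset ℕ)) (hU : U ⊆ Vnm n m) (s : ℕ) :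
    ∃ f : Set (Finset ℕ) → Set (Set (Finset ℕ)),
      (∀ V ∈ componentSets (m + s) (zetaIter m s U),
        f V ⊆ componentSets m U ∧ (f V).Finite ∧
        (unionAll V).ncard ≤ m - 1 + ∑ᶠ Z ∈ f V, Set.ncard Z) ∧
      (∀ V ∈ componentSets (m + s) (zetaIter m s U),
       ∀ V' ∈ componentSets (m + s) (zetaIter m s U),
        V ≠ V' → f V ∩ f V' = ∅) := by
  classical
  induction s with
  | zero =>
    refine ⟨fun V => {V}, fun V hV => ⟨?_, Set.finite_singleton V, ?_⟩, ?_⟩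
    · intro Z hZ
      rw [Set.mem_singleton_iff] at hZ
      subst hZ
      exact hV
    · obtain ⟨C, hVC⟩ := mem_componentSets_iff.1 hV
      rw [finsum_mem_singleton, hVC]
      exact comp_union_bound n (m + 0) (by omega) (zetaIter m 0 U)
        (zetaIter_subset n m hm U hU 0) C
    · intro V _ V' _ hne
      ext Z
      simp only [Set.mem_inter_iff, Set.mem_singleton_iff, Set.mem_empty_iff_false, iff_false,
        not_and]
      rintro rfl h
      exact hne h
  | succ s ih =>
    obtain ⟨f, hf1, hf2⟩ := ih
    obtain ⟨f', hg1, hg2⟩ := johnson_step n (m + s) m hm (Nat.le_add_right m s)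
      (zetaIter m s U) (zetaIter_subset n m hm U hU s) (componentSets m U) f hf1 hf2
    exact ⟨f', hg1, hg2⟩

theorem stmt10 (n m s : ℕ) (hm : 1 ≤ m) (hmn : m ≤ n) (hs : s ≤ n - m)
    (U : Set (Finset ℕ)) (hU : U ⊆ Vnm n m) :
    ∃ f : Set (Finset ℕ) → Set (Set (Finset ℕ)),
      (∀ V ∈ componentSets (m + s) (zetaIter m s U),
        f V ⊆ componentSets m U ∧
        (unionAll V).ncard ≤ m - 1 + ∑ᶠ Z ∈ f V, Set.ncard Z) ∧
      (∀ V ∈ componentSets (m + s) (zetaIter m s U),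
       ∀ V' ∈ componentSets (m + s) (zetaIter m s U),
        V ≠ V' → f V ∩ f V' = ∅) := by
  obtain ⟨f, hf1, hf2⟩ := johnson_main n m hm U hU s
  exact ⟨f, fun V hV => ⟨(hf1 V hV).1, (hf1 V hV).2.2⟩, hf2⟩
end

section
/- Let U ⊂ V_{n,m} with |U| ≤ n - m, where 1 ≤ m ≤ n. Then ζ^{n-m}(U) = ∅. -/
lemma zeta_structure (m : ℕ) (hm : 1 ≤ m) (U : Set (Finset ℕ))
    (hU : ∀ b ∈ U, b.card = m) (v : ℕ) :
    ∀ x ∈ zetaIter m v U, x.card = m + v ∧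
      ∃ S : Finset (Finset ℕ), ↑S ⊆ U ∧ v + 1 ≤ S.card ∧ x = S.sup id := by
  induction v with
  | zero =>
    intro x hx
    exact ⟨by simpa using hU x hx, {x}, by simpa [zetaIter] using hx, by simp, by simp⟩
  | succ v ih =>
    rintro x ⟨c, hc, d, hd, hcd, rfl⟩
    obtain ⟨hcc, Sc, hSc, hScc, hceq⟩ := ih c hc
    obtain ⟨hdc, Sd, hSd, hSdc, hdeq⟩ := ih d hd
    have hne : c ≠ d := by
      rintro rfl
      rw [Finset.inter_self] at hcd
      omega
    have hcard : (c ∪ d).card = m + (v + 1) := by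
      have := Finset.card_union_add_card_inter c d
      omega
    refine ⟨hcard, Sc ∪ Sd, ?_, ?_, ?_⟩
    · intro b hb
      rcases Finset.mem_union.mp (by exact_mod_cast hb) with h | h
      · exact hSc h
      · exact hSd h
    · have hnsub : ¬ Sd ⊆ Sc := by
        intro hsub
        apply hne
        have hdc' : d ⊆ c := by
          rw [hceq, hdeq]
          exact Finset.sup_le fun b hb => Finset.le_sup (f := id) (hsub hb)
        exact ((Finset.eq_of_subset_of_card_le hdc' (by omega))).symm
      obtain ⟨e, heSd, heSc⟩ := Finset.not_subset.mp hnsub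
      have : insert e Sc ⊆ Sc ∪ Sd := by
        intro a ha
        rcases Finset.mem_insert.mp ha with rfl | h
        · exact Finset.mem_union_right _ heSd
        · exact Finset.mem_union_left _ h
      have h1 := Finset.card_le_card this
      rw [Finset.card_insert_of_notMem heSc] at h1
      omega
    · rw [hceq, hdeq, Finset.sup_union]
      rfl

theorem stmt11 (n m : ℕ) (hm : 1 ≤ m) (hmn : m ≤ n)
    (U : Set (Finset ℕ)) (hU : U ⊆ Vnm n m) (hcard : U.ncard ≤ n - m) :
    zetaIter m (n - m) U = ∅ := by
  have hUfin : U.Finite := by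
    apply Set.Finite.subset (Finset.range n).powerset.finite_toSet
    intro b hb
    exact Finset.mem_coe.mpr (Finset.mem_powerset.mpr (hU hb).1)
  ext x
  simp only [Set.mem_empty_iff_false, iff_false]
  intro hx
  obtain ⟨_, S, hSU, hScard, _⟩ :=
    zeta_structure m hm U (fun b hb => (hU hb).2) (n - m) x hx
  have h1 : (↑S : Set (Finset ℕ)).ncard ≤ U.ncard :=
    Set.ncard_le_ncard hSU hUfin
  rw [Set.ncard_coe_finset] at h1
  omega
end
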